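/- Suppose a family of nonnegative reals (a_v^{p_1,…,p_k}), indexed by k ≥ 1, perimeters p_i ≥ 1 and inner volume v ≥ 0, satisfies the peeling equations a_v^{p_1,…,p_k} = a_v^{p_1+1,p_2,…,p_k} + 2 Σ_{i=0}^{p_1-1} Σ_{j≥0} τ_j(i+1) a_{v+j}^{p_1-i,p_2,…,p_k} + Σ_{i=0}^{p_1-1} a_v^{i+1,p_1-i,p_2,…,p_k}. Then the full family is determined by the values a_v^{1,…,1} (all perimeters equal to 1), for all numbers of holes k ≥ 1 and all v ≥ 0. -/
import Mathlib


/-- The peeling equations for a family `a` of reals indexed by the (unordered) multiset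
of hole perimeters and the inner volume, with `τ (i+1) j` the number of triangulations
of the `(i+1)`-gon with `j+1` vertices in total. -/
def SatisfiesPeeling (τ : ℕ → ℕ → ℝ) (a : Multiset ℕ → ℕ → ℝ) : Prop :=
  ∀ (p₁ : ℕ), 1 ≤ p₁ → ∀ rest : Multiset ℕ, (∀ q ∈ rest, 1 ≤ q) → ∀ v : ℕ,
    a (p₁ ::ₘ rest) v =
      a ((p₁ + 1) ::ₘ rest) v
      + 2 * ∑ i ∈ Finset.range p₁, ∑' j : ℕ, τ (i + 1) j * a ((p₁ - i) ::ₘ rest) (v + j)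
      + ∑ i ∈ Finset.range p₁, a ((i + 1) ::ₘ ((p₁ - i) ::ₘ rest)) v

/-- Suppose a family of nonnegative reals `a_v^{p₁,…,p_k}` satisfies the
peeling equations.  Then the full family is determined by the values `a_v^{1,…,1}`
(all perimeters equal to `1`), for all numbers of holes `k ≥ 1` and all volumes `v ≥ 0`:
any two such families agreeing on all-ones perimeters agree everywhere. -/
theorem peeling_determined_by_ones
    (τ : ℕ → ℕ → ℝ) (hτ : ∀ i j, 0 ≤ τ i j)
    (a a' : Multiset ℕ → ℕ → ℝ)
    (ha : ∀ m v, 0 ≤ a m v) (ha' : ∀ m v, 0 ≤ a' m v)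
    (hpeel : SatisfiesPeeling τ a) (hpeel' : SatisfiesPeeling τ a')
    (hones : ∀ (k : ℕ), 1 ≤ k → ∀ v : ℕ,
      a (Multiset.replicate k 1) v = a' (Multiset.replicate k 1) v) :
    ∀ m : Multiset ℕ, m ≠ 0 → (∀ q ∈ m, 1 ≤ q) → ∀ v : ℕ, a m v = a' m v := by
  have key : ∀ n : ℕ, ∀ m : Multiset ℕ, m ≠ 0 → (∀ q ∈ m, 1 ≤ q) →
      (m.map (fun q => q - 1)).sum = n → ∀ v : ℕ, a m v = a' m v := by
    intro n
    induction n using Nat.strong_induction_on with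
    | _ n ih =>
      intro m hm0 hm1 hw v
      by_cases hall : ∀ q ∈ m, q = 1
      · have hrep : m = Multiset.replicate m.card 1 :=
          (Multiset.eq_replicate_card).mpr hall
        rw [hrep]
        exact hones m.card (Multiset.card_pos.mpr hm0) v
      · push_neg at hall
        obtain ⟨p, hpm, hp1⟩ := hall
        have hp2 : 2 ≤ p := by have := hm1 p hpm; omega
        set rest := m.erase p with hrest_def
        have hm : m = p ::ₘ rest := (Multiset.cons_erase hpm).symm
        have hrest1 : ∀ q ∈ rest, 1 ≤ q := fun q hq =>
          hm1 q (Multiset.mem_of_mem_erase hq)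
        set p₁ := p - 1 with hp₁_def
        have hp₁1 : 1 ≤ p₁ := by omega
        have hpp : p₁ + 1 = p := by omega
        have hwrest : n = p₁ + (rest.map (fun q => q - 1)).sum := by
          rw [← hw, hm, Multiset.map_cons, Multiset.sum_cons]
        -- termwise equalities from the induction hypothesis
        have haux : ∀ x : ℕ, 1 ≤ x → x ≤ p₁ → ∀ w : ℕ,
            a (x ::ₘ rest) w = a' (x ::ₘ rest) w := by
          intro x hx1 hx2 w
          refine ih ((x - 1) + (rest.map (fun q => q - 1)).sum) (by omega)
            (x ::ₘ rest) (Multiset.cons_ne_zero) ?_ ?_ w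
          · intro q hq
            rcases Multiset.mem_cons.mp hq with h | h
            · omega
            · exact hrest1 q h
          · simp [Multiset.map_cons, Multiset.sum_cons]
        have haux2 : ∀ i ∈ Finset.range p₁,
            a ((i + 1) ::ₘ ((p₁ - i) ::ₘ rest)) v = a' ((i + 1) ::ₘ ((p₁ - i) ::ₘ rest)) v := by
          intro i hi
          have hi' : i < p₁ := Finset.mem_range.mp hi
          refine ih (i + (p₁ - i - 1) + (rest.map (fun q => q - 1)).sum) (by omega)
            _ (Multiset.cons_ne_zero) ?_ ?_ v
          · intro q hq
            rcases Multiset.mem_cons.mp hq with h | h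
            · omega
            · rcases Multiset.mem_cons.mp h with h' | h'
              · omega
              · exact hrest1 q h'
          · simp only [Multiset.map_cons, Multiset.sum_cons]; omega
        have e1 := hpeel p₁ hp₁1 rest hrest1 v
        have e2 := hpeel' p₁ hp₁1 rest hrest1 v
        have hsum1 : ∑ i ∈ Finset.range p₁, ∑' j : ℕ, τ (i + 1) j * a ((p₁ - i) ::ₘ rest) (v + j)
            = ∑ i ∈ Finset.range p₁, ∑' j : ℕ, τ (i + 1) j * a' ((p₁ - i) ::ₘ rest) (v + j) := by
          refine Finset.sum_congr rfl fun i hi => tsum_congr fun j => ?_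
          have hi' : i < p₁ := Finset.mem_range.mp hi
          rw [haux (p₁ - i) (by omega) (by omega) (v + j)]
        have hsum2 := Finset.sum_congr rfl haux2
        have h0 : a (p₁ ::ₘ rest) v = a' (p₁ ::ₘ rest) v := haux p₁ hp₁1 le_rfl v
        rw [hsum1, hsum2] at e1
        rw [hm, ← hpp]
        linarith
  intro m hm0 hm1 v
  exact key ((m.map (fun q => q - 1)).sum) m hm0 hm1 rfl v
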